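/- Let Ω be the incidence matrix of a finite directed graph restricted to a subset C of edges. A row vector α on edges satisfies α Ω = 0 if and only if α lies in the span (over the integers, and hence over the rationals/reals) of signed indicator vectors of cycles contained entirely in C. -/

import Mathlib

/-- The incidence matrix of a finite directed graph.  Here the edge-index type `Eg` plays the
role of the capacitive edge set `C`, so `inc hd tl` is the matrix `Ω` with rows indexed by `C`. -/
def inc {Eg Vt : Type*} [DecidableEq Vt] (hd tl : Eg → Vt) : Matrix Eg Vt ℝ :=
  Matrix.of fun e v => if v = hd e then 1 else if v = tl e then -1 else 0

/-- `c : Eg → ℝ` is the signed indicator vector of a cycle: there is a closed walk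
`v 0 - v 1 - ⋯ - v l - v 0` traversing distinct edges `e 0, …, e l`, edge `e j` joining `v j`
and `v (j+1)` (indices mod `l + 1`) with sign `σ j = ±1` according to orientation, and `c`
assigns `σ j` to `e j` and `0` to every other edge. -/
def IsCycleVec {Eg Vt : Type*} [DecidableEq Eg] (hd tl : Eg → Vt) (c : Eg → ℝ) : Prop :=
  ∃ (l : ℕ) (e : Fin (l + 1) → Eg) (v : Fin (l + 1) → Vt) (σ : Fin (l + 1) → ℤ),
    Function.Injective e ∧
    (∀ j, (σ j = 1 ∧ tl (e j) = v j ∧ hd (e j) = v (j + 1)) ∨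
          (σ j = -1 ∧ hd (e j) = v j ∧ tl (e j) = v (j + 1))) ∧
    c = fun f => ∑ j, if e j = f then (σ j : ℝ) else 0

lemma cycleVec_kernel {Eg Vt : Type*} [Fintype Eg] [DecidableEq Eg] [Fintype Vt]
    [DecidableEq Vt] (hd tl : Eg → Vt) (hne : ∀ e, hd e ≠ tl e) {c : Eg → ℝ}
    (hc : IsCycleVec hd tl c) : Matrix.vecMul c (inc hd tl) = 0 := by
  classical
  obtain ⟨l, e, v, σ, hinj, hstep, rfl⟩ := hc
  funext w
  have h1 : Matrix.vecMul (fun f => ∑ j, if e j = f then (σ j : ℝ) else 0) (inc hd tl) w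
      = ∑ f, (∑ j, if e j = f then (σ j : ℝ) else 0) * inc hd tl f w := by
    simp [Matrix.vecMul, dotProduct]
  rw [h1]
  have h2 : ∑ f, (∑ j, if e j = f then (σ j : ℝ) else 0) * inc hd tl f w
      = ∑ j, (σ j : ℝ) * inc hd tl (e j) w := by
    simp_rw [Finset.sum_mul, ite_mul, zero_mul]
    rw [Finset.sum_comm]
    simp
  rw [h2]
  have key : ∀ j, (σ j : ℝ) * inc hd tl (e j) w
      = (if w = v (j + 1) then (1 : ℝ) else 0) - (if w = v j then 1 else 0) := by
    intro j
    have hne' := hne (e j)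
    rcases hstep j with ⟨h1, h2, h3⟩ | ⟨h1, h2, h3⟩ <;>
      rw [h2, h3] at hne' <;>
      simp only [inc, Matrix.of_apply, h1, h2, h3] <;>
      split_ifs <;> simp_all
  rw [Finset.sum_congr rfl fun j _ => key j, Finset.sum_sub_distrib, Pi.zero_apply, sub_eq_zero]
  exact Fintype.sum_equiv (Equiv.addRight 1) _ _ fun j => rfl

lemma exists_cycleVec {Eg Vt : Type*} [Fintype Eg] [DecidableEq Eg] [Fintype Vt]
    [DecidableEq Vt] (hd tl : Eg → Vt) (hne : ∀ e, hd e ≠ tl e) {α : Eg → ℝ}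
    (hker : Matrix.vecMul α (inc hd tl) = 0) (hα : α ≠ 0) :
    ∃ c : Eg → ℝ, IsCycleVec hd tl c ∧ (∀ f, c f ≠ 0 → α f ≠ 0) ∧ ∃ f, α f ≠ 0 ∧ c f ≠ 0 := by
  classical
  set ft : Eg → Vt := fun e => if 0 < α e then tl e else hd e with hft
  set fh : Eg → Vt := fun e => if 0 < α e then hd e else tl e with hfh
  -- flow conservation
  have hcons : ∀ w, (∑ e, if ft e = w then |α e| else 0) = ∑ e, if fh e = w then |α e| else 0 := by
    intro w
    have h0 : ∑ e, α e * inc hd tl e w = 0 := by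
      have := congrFun hker w
      simpa [Matrix.vecMul, dotProduct] using this
    have key : ∀ e, (if fh e = w then |α e| else 0) - (if ft e = w then |α e| else 0)
        = α e * inc hd tl e w := by
      intro e
      rcases lt_or_ge 0 (α e) with h | h
      · have e1 : fh e = hd e := if_pos h
        have e2 : ft e = tl e := if_pos h
        rw [e1, e2, abs_of_pos h]
        by_cases h1 : w = hd e
        · have h2 : ¬ w = tl e := fun h2 => hne e (h1.symm.trans h2)
          rw [if_pos h1.symm, if_neg (fun h' => h2 h'.symm)]
          simp [inc, h1, h2]
        · by_cases h2 : w = tl e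
          · rw [if_neg (fun h' => h1 h'.symm), if_pos h2.symm]
            simp [inc, h1, h2, Ne.symm (hne e)]
            try ring
          · rw [if_neg (fun h' => h1 h'.symm), if_neg (fun h' => h2 h'.symm)]
            simp [inc, h1, h2]
      · have e1 : fh e = tl e := if_neg (not_lt.mpr h)
        have e2 : ft e = hd e := if_neg (not_lt.mpr h)
        rw [e1, e2, abs_of_nonpos h]
        by_cases h1 : w = hd e
        · have h2 : ¬ w = tl e := fun h2 => hne e (h1.symm.trans h2)
          rw [if_neg (fun h' => h2 h'.symm), if_pos h1.symm]
          simp [inc, h1, h2, Ne.symm (hne e)]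
          try ring
        · by_cases h2 : w = tl e
          · rw [if_pos h2.symm, if_neg (fun h' => h1 h'.symm)]
            simp [inc, h1, h2, Ne.symm (hne e)]
            try ring
          · rw [if_neg (fun h' => h2 h'.symm), if_neg (fun h' => h1 h'.symm)]
            simp [inc, h1, h2]
    have h1 : ∑ e, ((if fh e = w then |α e| else 0) - (if ft e = w then |α e| else 0)) = 0 := by
      rw [Finset.sum_congr rfl fun e _ => key e]; exact h0
    rw [Finset.sum_sub_distrib] at h1
    linarith
  have hstep : ∀ w, (∃ e, α e ≠ 0 ∧ fh e = w) → ∃ f, α f ≠ 0 ∧ ft f = w := by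
    intro w ⟨e, he, hew⟩
    by_contra hno
    push_neg at hno
    have hout : (∑ e, if ft e = w then |α e| else 0) = 0 := by
      apply Finset.sum_eq_zero
      intro f _
      split_ifs with h
      · exact abs_eq_zero.mpr (by_contra fun hf => hno f hf h)
      · rfl
    have hin : 0 < ∑ e, if fh e = w then |α e| else 0 := by
      refine Finset.sum_pos' (fun f _ => ?_) ⟨e, Finset.mem_univ e, ?_⟩
      · split_ifs
        · exact abs_nonneg _
        · exact le_refl 0
      · rw [if_pos hew]; exact abs_pos.mpr he
    rw [hcons w] at hout
    linarith
  obtain ⟨e₀, he₀⟩ : ∃ e, α e ≠ 0 := by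
    by_contra h
    push_neg at h
    exact hα (funext h)
  have hnext : ∀ p : {e : Eg // α e ≠ 0}, ∃ q : {e : Eg // α e ≠ 0}, ft q.1 = fh p.1 := by
    intro p
    obtain ⟨f, hf, hfw⟩ := hstep (fh p.1) ⟨p.1, p.2, rfl⟩
    exact ⟨⟨f, hf⟩, hfw⟩
  choose next hnextspec using hnext
  set es : ℕ → {e : Eg // α e ≠ 0} := fun n => next^[n] ⟨e₀, he₀⟩ with hes
  have hes' : ∀ n, es (n + 1) = next (es n) := fun n => Function.iterate_succ_apply' next n _
  set vv : ℕ → Vt := fun n => ft (es n).1 with hvv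
  have hv1 : ∀ n, vv (n + 1) = fh (es n).1 := by
    intro n
    show ft (es (n + 1)).1 = fh (es n).1
    rw [hes' n]
    exact hnextspec (es n)
  -- vertex repetition
  obtain ⟨a, b, hab, hvab⟩ := Finite.exists_ne_map_eq_of_infinite vv
  have hex : ∃ n, ∃ i < n, vv i = vv n := by
    rcases hab.lt_or_gt with h | h
    · exact ⟨b, a, h, hvab⟩
    · exact ⟨a, b, h, hvab.symm⟩
  obtain ⟨k, ⟨i, hik, hvik⟩, hmin⟩ :
      ∃ k, (∃ i < k, vv i = vv k) ∧ ∀ m < k, ¬ ∃ i < m, vv i = vv m :=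
    ⟨Nat.find hex, Nat.find_spec hex, fun m hm => Nat.find_min hex hm⟩
  have hvinj : ∀ a b, a < b → b < k → vv a ≠ vv b := by
    intro a b hab hbk hv
    exact hmin b hbk ⟨a, hab, hv⟩
  obtain ⟨l, hkl⟩ : ∃ l, k = i + l + 1 := ⟨k - i - 1, by omega⟩
  set E : Fin (l + 1) → Eg := fun j => (es (i + j.val)).1 with hE
  set V : Fin (l + 1) → Vt := fun j => vv (i + j.val) with hV
  set σ : Fin (l + 1) → ℤ := fun j => if 0 < α (E j) then 1 else -1 with hσ
  have hEft : ∀ j, ft (E j) = V j := fun j => rfl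
  have hEfh : ∀ j, fh (E j) = V (j + 1) := by
    intro j
    have h1 : fh (E j) = vv (i + j.val + 1) := (hv1 (i + j.val)).symm
    rw [h1]
    show vv (i + j.val + 1) = vv (i + ((j + 1 : Fin (l + 1))).val)
    rcases eq_or_lt_of_le (Nat.lt_succ_iff.mp j.isLt) with hj | hj
    · have hj1 : ((j + 1 : Fin (l + 1))).val = 0 := by
        rw [Fin.val_add, Fin.val_one']
        rcases Nat.eq_zero_or_pos l with h0 | h0
        · simp [Nat.mod_one, h0]
        · have h1' : 1 % (l + 1) = 1 := Nat.mod_eq_of_lt (by omega)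
          rw [h1', hj]
          exact Nat.mod_self _
      rw [hj1]
      have h2 : i + j.val + 1 = k := by omega
      rw [h2, Nat.add_zero]
      exact hvik.symm
    · have hj1 : ((j + 1 : Fin (l + 1))).val = j.val + 1 := by
        rw [Fin.val_add, Fin.val_one']
        have h1' : 1 % (l + 1) = 1 := Nat.mod_eq_of_lt (by omega)
        rw [h1']
        exact Nat.mod_eq_of_lt (by omega)
      rw [hj1, ← Nat.add_assoc]
  have hEinj : Function.Injective E := by
    intro a b h
    have hva : vv (i + a.val) = vv (i + b.val) := congrArg ft h
    have ha := a.isLt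
    have hb := b.isLt
    by_contra hne2
    have hval : a.val ≠ b.val := fun h' => hne2 (Fin.ext h')
    rcases hval.lt_or_gt with h' | h'
    · exact hvinj (i + a.val) (i + b.val) (by omega) (by omega) hva
    · exact hvinj (i + b.val) (i + a.val) (by omega) (by omega) hva.symm
  have hdisj : ∀ j, (σ j = 1 ∧ tl (E j) = V j ∧ hd (E j) = V (j + 1)) ∨
      (σ j = -1 ∧ hd (E j) = V j ∧ tl (E j) = V (j + 1)) := by
    intro j
    by_cases hpos : 0 < α (E j)
    · left
      refine ⟨by rw [hσ]; simp [hpos], ?_, ?_⟩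
      · rw [← hEft j, hft]; simp [hpos]
      · rw [← hEfh j, hfh]; simp [hpos]
    · right
      refine ⟨by rw [hσ]; simp [hpos], ?_, ?_⟩
      · rw [← hEft j, hft]; simp [hpos]
      · rw [← hEfh j, hfh]; simp [hpos]
  refine ⟨fun f => ∑ j, if E j = f then (σ j : ℝ) else 0,
    ⟨l, E, V, σ, hEinj, hdisj, rfl⟩, ?_, ?_⟩
  · intro f hcf
    obtain ⟨j, _, hj⟩ := Finset.exists_ne_zero_of_sum_ne_zero hcf
    have hEjf : E j = f := by
      by_contra h
      rw [if_neg h] at hj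
      exact hj rfl
    rw [← hEjf]
    exact (es (i + j.val)).2
  · refine ⟨E 0, (es (i + (0 : Fin (l + 1)).val)).2, ?_⟩
    show (∑ j, if E j = E 0 then (σ j : ℝ) else 0) ≠ 0
    have hsum : (∑ j, if E j = E 0 then (σ j : ℝ) else 0) = (σ 0 : ℝ) := by
      rw [Finset.sum_eq_single 0]
      · rw [if_pos rfl]
      · intro j _ hj
        rw [if_neg (fun h => hj (hEinj h))]
      · intro h
        exact absurd (Finset.mem_univ 0) h
    rw [hsum]
    by_cases h0 : 0 < α (E 0)
    · have hσ0 : σ 0 = 1 := by rw [hσ]; simp [h0]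
      rw [hσ0]; norm_num
    · have hσ0 : σ 0 = -1 := by rw [hσ]; simp [h0]
      rw [hσ0]; norm_num

/-- A row vector `α` on edges satisfies `α Ω = 0` iff `α` lies in the span of the signed
indicator vectors of cycles. -/
theorem stmt3 {Eg Vt : Type*} [Fintype Eg] [DecidableEq Eg] [Fintype Vt] [DecidableEq Vt]
    (hd tl : Eg → Vt) (hne : ∀ e, hd e ≠ tl e) (α : Eg → ℝ) :
    Matrix.vecMul α (inc hd tl) = 0 ↔
      α ∈ Submodule.span ℝ {c : Eg → ℝ | IsCycleVec hd tl c} := by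
  classical
  constructor
  · intro hker
    have main : ∀ n (β : Eg → ℝ), (Finset.univ.filter fun e => β e ≠ 0).card ≤ n →
        Matrix.vecMul β (inc hd tl) = 0 →
        β ∈ Submodule.span ℝ {c : Eg → ℝ | IsCycleVec hd tl c} := by
      intro n
      induction n with
      | zero =>
        intro β hcard hk
        have hβ : β = 0 := by
          funext e
          simp only [Pi.zero_apply]
          by_contra h
          have he : e ∈ Finset.univ.filter fun e => β e ≠ 0 := by
            simp [h]
          have := Finset.card_pos.mpr ⟨e, he⟩
          omega
        rw [hβ]
        exact Submodule.zero_mem _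
      | succ n ih =>
        intro β hcard hk
        by_cases hβ : β = 0
        · rw [hβ]; exact Submodule.zero_mem _
        · obtain ⟨c, hc, hsupp, f₀, hf₀, hcf₀⟩ := exists_cycleVec hd tl hne hk hβ
          set t : ℝ := β f₀ / c f₀ with ht
          set β' : Eg → ℝ := β - t • c with hβ'
          have hkc : Matrix.vecMul c (inc hd tl) = 0 := cycleVec_kernel hd tl hne hc
          have hk' : Matrix.vecMul β' (inc hd tl) = 0 := by
            rw [hβ', Matrix.sub_vecMul, Matrix.smul_vecMul, hk, hkc]
            simp
          have hβ'f₀ : β' f₀ = 0 := by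
            simp only [hβ', Pi.sub_apply, Pi.smul_apply, smul_eq_mul, ht]
            field_simp
            ring
          have hsub : (Finset.univ.filter fun e => β' e ≠ 0) ⊆
              (Finset.univ.filter fun e => β e ≠ 0).erase f₀ := by
            intro f hf
            rw [Finset.mem_filter] at hf
            rw [Finset.mem_erase, Finset.mem_filter]
            refine ⟨fun h => hf.2 (h ▸ hβ'f₀), Finset.mem_univ f, fun h => hf.2 ?_⟩
            have hcf : c f = 0 := by
              by_contra h'
              exact hsupp f h' h
            simp [hβ', h, hcf]
          have hf₀mem : f₀ ∈ Finset.univ.filter fun e => β e ≠ 0 := by simp [hf₀]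
          have hcard' : (Finset.univ.filter fun e => β' e ≠ 0).card ≤ n := by
            have h1 := Finset.card_le_card hsub
            have h2 := Finset.card_erase_of_mem hf₀mem
            have h3 := Finset.card_pos.mpr ⟨f₀, hf₀mem⟩
            omega
          have hmem' := ih β' hcard' hk'
          have hsplit : β = β' + t • c := by
            rw [hβ']; abel
          rw [hsplit]
          exact Submodule.add_mem _ hmem'
            (Submodule.smul_mem _ _ (Submodule.subset_span hc))
    exact main _ α le_rfl hker
  · intro hmem
    have hle : Submodule.span ℝ {c : Eg → ℝ | IsCycleVec hd tl c} ≤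
        LinearMap.ker (Matrix.vecMulLinear (inc hd tl)) := by
      rw [Submodule.span_le]
      intro c hc
      rw [SetLike.mem_coe, LinearMap.mem_ker, Matrix.vecMulLinear_apply]
      exact cycleVec_kernel hd tl hne hc
    have h := hle hmem
    rwa [LinearMap.mem_ker, Matrix.vecMulLinear_apply] at h
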